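/- Let P be a permutation matrix, u ∈ ℕ, and q ∈ (1/u, 1). If ex_P(u) < q·u², then for every z ≥ u, every u×z binary matrix with at least qz 1-entries in every row contains P (i.e., f_P(z, qz) < u). -/
import Mathlib


open Asymptotics

noncomputable section

/-- Number of 1-entries of a binary matrix. -/
def ones {n m : ℕ} (A : Fin n → Fin m → Bool) : ℕ :=
  Nat.card {p : Fin n × Fin m // A p.1 p.2 = true}

/-- Number of 0-entries of a binary matrix. -/
def zeros {n m : ℕ} (A : Fin n → Fin m → Bool) : ℕ :=
  Nat.card {p : Fin n × Fin m // A p.1 p.2 = false}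

/-- `B` is contained in `A`: `B` can be obtained from `A` by deleting rows/columns
and turning some 1-entries into 0-entries. -/
def containsB {a b n m : ℕ} (B : Fin a → Fin b → Bool) (A : Fin n → Fin m → Bool) : Prop :=
  ∃ f : Fin a → Fin n, ∃ g : Fin b → Fin m, StrictMono f ∧ StrictMono g ∧
    ∀ i j, B i j = true → A (f i) (g j) = true

/-- The permutation matrix of a permutation `σ`. -/
def permMat {k : ℕ} (σ : Equiv.Perm (Fin k)) : Fin k → Fin k → Bool :=
  fun i j => decide (σ i = j)

/-- `A` contains the permutation matrix of `σ`. -/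
def containsP {k n m : ℕ} (σ : Equiv.Perm (Fin k)) (A : Fin n → Fin m → Bool) : Prop :=
  containsB (permMat σ) A

/-- `ex(n,P)`: the maximum number of 1-entries in an `n × n` binary matrix avoiding
the permutation matrix of `σ`. -/
def exP {k : ℕ} (n : ℕ) (σ : Equiv.Perm (Fin k)) : ℕ :=
  sSup {c : ℕ | ∃ A : Fin n → Fin n → Bool, ¬ containsP σ A ∧ c = ones A}

/-- `f_P(z,y)`: the maximum number of rows of a binary `P`-avoiding matrix with `z` columns
and at least `y` 1-entries in every row. -/
def fP {k : ℕ} (σ : Equiv.Perm (Fin k)) (z : ℕ) (y : ℝ) : ℕ :=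
  sSup {h : ℕ | ∃ A : Fin h → Fin z → Bool, ¬ containsP σ A ∧
    ∀ i : Fin h, y ≤ (Nat.card {j : Fin z // A i j = true} : ℝ)}

lemma card_row {m : ℕ} (p : Fin m → Bool) :
    Nat.card {j : Fin m // p j = true} = ∑ j, if p j = true then 1 else 0 := by
  rw [Nat.card_eq_fintype_card, Fintype.card_subtype, Finset.card_filter]

lemma ones_eq {n m : ℕ} (A : Fin n → Fin m → Bool) :
    ones A = ∑ i, ∑ j, if A i j = true then 1 else 0 := by
  rw [ones, Nat.card_eq_fintype_card, Fintype.card_subtype, Finset.card_filter,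
    Fintype.sum_prod_type]

lemma contains_sub {k n m n' m' : ℕ} (σ : Equiv.Perm (Fin k)) (A : Fin n → Fin m → Bool)
    (f : Fin n' → Fin n) (g : Fin m' → Fin m) (hf : StrictMono f) (hg : StrictMono g)
    (h : containsP σ (fun i j => A (f i) (g j))) : containsP σ A := by
  obtain ⟨f', g', hf', hg', hB⟩ := h
  exact ⟨f ∘ f', g ∘ g', hf.comp hf', hg.comp hg', fun i j hij => hB i j hij⟩

lemma ones_le_exP {k u : ℕ} (σ : Equiv.Perm (Fin k)) (A : Fin u → Fin u → Bool)
    (hA : ¬ containsP σ A) : ones A ≤ exP u σ := by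
  apply le_csSup
  · refine ⟨u * u, ?_⟩
    rintro c ⟨B, -, rfl⟩
    calc ones B ≤ Nat.card (Fin u × Fin u) := by
          rw [ones, Nat.card_eq_fintype_card, Nat.card_eq_fintype_card]
          exact Fintype.card_subtype_le _
      _ = u * u := by simp [Nat.card_eq_fintype_card]
  · exact ⟨A, hA, rfl⟩

/-- If `ex_P(u) < q·u²`, then for every `z ≥ u`, every `u × z` binary matrix with at least
`qz` 1-entries in every row contains `P`; that is, `f_P(z, qz) < u`. -/
theorem stmt6 {k : ℕ} (σ : Equiv.Perm (Fin k)) (u : ℕ) (hu : 1 ≤ u) (q : ℝ)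
    (hq1 : 1 / (u : ℝ) < q) (hq2 : q < 1)
    (hex : (exP u σ : ℝ) < q * (u : ℝ) ^ 2) :
    ∀ z : ℕ, u ≤ z → fP σ z (q * z) < u := by
  intro z hz
  have hz1 : 1 ≤ z := le_trans hu hz
  have hzR : (0 : ℝ) < z := by exact_mod_cast hz1
  have hq0 : 0 < q := lt_trans (by positivity) hq1
  have key : fP σ z (q * z) ≤ u - 1 := by
    apply csSup_le'
    rintro h ⟨A, hA, hrow⟩
    by_contra hcon
    have hle : u ≤ h := by omega
    -- restrict to first u rows
    set A' : Fin u → Fin z → Bool := fun i j => A (Fin.castLE hle i) j with hA'def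
    have hA' : ¬ containsP σ A' := fun hc =>
      hA (contains_sub σ A (Fin.castLE hle) id (Fin.strictMono_castLE hle)
        strictMono_id hc)
    -- column counts
    set c : Fin z → ℕ := fun j => ∑ i, if A' i j = true then 1 else 0 with hcdef
    set T : ℕ := ∑ j, c j with hTdef
    -- total ones lower bound
    have hrow' : ∀ i : Fin u, q * z ≤ ((∑ j, if A' i j = true then 1 else 0 : ℕ) : ℝ) := by
      intro i
      have := hrow (Fin.castLE hle i)
      rwa [card_row] at this
    have hT : (u : ℝ) * (q * z) ≤ (T : ℝ) := by
      have : T = ∑ i : Fin u, ∑ j, if A' i j = true then 1 else 0 := by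
        rw [hTdef]; exact Finset.sum_comm
      rw [this]
      push_cast
      calc (u : ℝ) * (q * z) = ∑ _i : Fin u, q * z := by simp [mul_comm]
        _ ≤ _ := by
            apply Finset.sum_le_sum
            intro i _
            exact_mod_cast hrow' i
    -- choose max size-u column set
    obtain ⟨s, hsmem, hsmax⟩ := Finset.exists_max_image
      ((Finset.univ : Finset (Fin z)).powersetCard u) (fun s => ∑ j ∈ s, c j)
      (Finset.powersetCard_nonempty.2 (by simpa using hz))
    have hscard : s.card = u := (Finset.mem_powersetCard.1 hsmem).2
    have hsne : s.Nonempty := Finset.card_pos.1 (by omega)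
    obtain ⟨j₀, hj₀s, hj₀min⟩ := Finset.exists_min_image s c hsne
    set S : ℕ := ∑ j ∈ s, c j with hSdef
    -- outside columns are small
    have hout : ∀ j : Fin z, j ∉ s → c j ≤ c j₀ := by
      intro j hj
      have hcard' : (insert j (s.erase j₀)).card = u := by
        rw [Finset.card_insert_of_notMem (fun hmem => hj (Finset.mem_of_mem_erase hmem)),
          Finset.card_erase_of_mem hj₀s, hscard]
        omega
      have hmem' : insert j (s.erase j₀) ∈
          (Finset.univ : Finset (Fin z)).powersetCard u :=
        Finset.mem_powersetCard.2 ⟨Finset.subset_univ _, hcard'⟩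
      have := hsmax _ hmem'
      rw [Finset.sum_insert (fun hmem => hj (Finset.mem_of_mem_erase hmem))] at this
      rw [hSdef, ← Finset.add_sum_erase s c hj₀s] at this
      omega
    have humin : u * c j₀ ≤ S := by
      have := Finset.card_nsmul_le_sum s c (c j₀) (fun x hx => hj₀min x hx)
      rwa [hscard, smul_eq_mul] at this
    -- u * T ≤ z * S
    have hmain : u * T ≤ z * S := by
      have hsplit : T = S + ∑ j ∈ sᶜ, c j := by
        rw [hTdef, hSdef, ← Finset.sum_add_sum_compl s c]
      have hcompl : ∑ j ∈ sᶜ, c j ≤ (z - u) * c j₀ := by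
        have : ∑ j ∈ sᶜ, c j ≤ ∑ _j ∈ sᶜ, c j₀ :=
          Finset.sum_le_sum (fun j hj => hout j (Finset.mem_compl.1 hj))
        rwa [Finset.sum_const, Finset.card_compl, hscard, Fintype.card_fin,
          smul_eq_mul] at this
      calc u * T = u * S + u * (∑ j ∈ sᶜ, c j) := by rw [hsplit]; ring
        _ ≤ u * S + u * ((z - u) * c j₀) := by
            exact Nat.add_le_add_left (Nat.mul_le_mul_left u hcompl) _
        _ = u * S + (z - u) * (u * c j₀) := by ring
        _ ≤ u * S + (z - u) * S := Nat.add_le_add_left (Nat.mul_le_mul_left _ humin) _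
        _ = (u + (z - u)) * S := by ring
        _ = z * S := by rw [Nat.add_sub_cancel' hz]
    -- real: q u^2 ≤ S
    have hSreal : q * (u : ℝ) ^ 2 ≤ (S : ℝ) := by
      have h1 : (u : ℝ) * ((u : ℝ) * (q * z)) ≤ (u : ℝ) * T := by
        exact mul_le_mul_of_nonneg_left hT (by positivity)
      have h2 : ((u : ℝ) * T) ≤ (z : ℝ) * S := by exact_mod_cast hmain
      have h3 : q * (u : ℝ) ^ 2 * z ≤ (z : ℝ) * S := by nlinarith
      nlinarith
    -- the u×u submatrix on columns s
    set g := s.orderEmbOfFin hscard with hgdef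
    set B : Fin u → Fin u → Bool := fun i j => A' i (g j) with hBdef
    have hB : ¬ containsP σ B := fun hc =>
      hA' (contains_sub σ A' id g strictMono_id g.strictMono hc)
    have honesB : ones B = S := by
      rw [ones_eq, Finset.sum_comm, hSdef, ← Finset.sum_coe_sort s c]
      rw [← Fintype.sum_equiv (s.orderIsoOfFin hscard).toEquiv
        (fun j : Fin u => ∑ i, if B i j = true then 1 else 0)
        (fun x : {x // x ∈ s} => c x) ?_]
      intro j
      rw [hcdef]
      congr 1
    have := ones_le_exP σ B hB
    rw [honesB] at this
    have : (S : ℝ) ≤ (exP u σ : ℝ) := by exact_mod_cast this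
    linarith
  omega


end
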